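/- Let B be a unital C*-algebra, let p ∈ B be a projection with q = 1 − p, and let g be a bounded linear functional on B. Define bounded linear functionals g_p and g_q on B by g_p(b) = g(p b p) and g_q(b) = g(q b q). Then ‖g_p + g_q‖ = ‖g_p‖ + ‖g_q‖, and this common value is at most ‖g‖. -/

import Mathlib

section Aux

variable {A : Type*} [NormedRing A] [StarRing A] [CStarRing A]

omit [StarRing A] [CStarRing A] in
private lemma pow_orth {u v : A} (huv : u * v = 0) (m k : ℕ) :
    u ^ (m + 1) * v ^ (k + 1) = 0 := by
  rw [pow_succ u m, pow_succ' v k, mul_assoc, ← mul_assoc u v, huv, zero_mul, mul_zero]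

omit [StarRing A] [CStarRing A] in
private lemma orth_pow_add {u v : A} (huv : u * v = 0) (hvu : v * u = 0) (n : ℕ) :
    (u + v) ^ 2 ^ n = u ^ 2 ^ n + v ^ 2 ^ n := by
  induction n with
  | zero => simp
  | succ k ih =>
    have h1 : 2 ^ k = (2 ^ k - 1) + 1 := (Nat.sub_add_cancel Nat.one_le_two_pow).symm
    have huv' : u ^ 2 ^ k * v ^ 2 ^ k = 0 := by rw [h1]; exact pow_orth huv _ _
    have hvu' : v ^ 2 ^ k * u ^ 2 ^ k = 0 := by rw [h1]; exact pow_orth hvu _ _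
    rw [pow_succ, pow_mul, ih, sq, add_mul, mul_add, mul_add, huv', hvu',
      ← sq, ← sq, ← pow_mul, ← pow_mul, ← pow_succ]
    abel

private lemma norm_add_le_max_of_orth_sa {u v : A} (hu : IsSelfAdjoint u)
    (hv : IsSelfAdjoint v) (huv : u * v = 0) (hvu : v * u = 0) :
    ‖u + v‖ ≤ max ‖u‖ ‖v‖ := by
  set M : ℝ := max ‖u‖ ‖v‖ with hM
  have hM0 : 0 ≤ M := le_trans (norm_nonneg u) (le_max_left _ _)
  have key : ∀ n : ℕ, ‖u + v‖ ^ 2 ^ n ≤ 2 * M ^ 2 ^ n := by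
    intro n
    have hsa : IsSelfAdjoint (u + v) := hu.add hv
    have h1 : ‖(u + v) ^ 2 ^ n‖ = ‖u + v‖ ^ 2 ^ n := by
      simpa [← coe_nnnorm, NNReal.coe_pow] using
        congrArg NNReal.toReal (hsa.nnnorm_pow_two_pow n)
    calc ‖u + v‖ ^ 2 ^ n = ‖(u + v) ^ 2 ^ n‖ := h1.symm
      _ = ‖u ^ 2 ^ n + v ^ 2 ^ n‖ := by rw [orth_pow_add huv hvu]
      _ ≤ ‖u ^ 2 ^ n‖ + ‖v ^ 2 ^ n‖ := norm_add_le _ _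
      _ ≤ ‖u‖ ^ 2 ^ n + ‖v‖ ^ 2 ^ n := by
          gcongr <;> exact norm_pow_le' _ (Nat.pos_of_ne_zero (by positivity))
      _ ≤ M ^ 2 ^ n + M ^ 2 ^ n :=
          add_le_add (pow_le_pow_left₀ (norm_nonneg u) (le_max_left _ _) _)
            (pow_le_pow_left₀ (norm_nonneg v) (le_max_right _ _) _)
      _ = 2 * M ^ 2 ^ n := by ring
  by_contra hlt
  push_neg at hlt
  have hMpos : 0 < ‖u + v‖ := lt_of_le_of_lt hM0 hlt
  rcases eq_or_lt_of_le hM0 with hM0' | hM0'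
  · have h0 := key 0
    rw [← hM0'] at h0
    simp at h0
    rw [h0, norm_zero] at hMpos
    exact lt_irrefl _ hMpos
  · set r : ℝ := ‖u + v‖ / M with hr
    have hr1 : 1 < r := (one_lt_div hM0').mpr hlt
    obtain ⟨n, hn⟩ := ((tendsto_pow_atTop_atTop_of_one_lt hr1).eventually_gt_atTop 2).exists
    have h2n : (2:ℝ) < r ^ 2 ^ n :=
      lt_of_lt_of_le hn (pow_le_pow_right₀ hr1.le (Nat.lt_two_pow_self (n := n)).le)
    have hk := key n
    have heq : ‖u + v‖ ^ 2 ^ n = r ^ 2 ^ n * M ^ 2 ^ n := by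
      rw [hr, div_pow, div_mul_cancel₀]
      positivity
    rw [heq] at hk
    have hMn : 0 < M ^ 2 ^ n := by positivity
    nlinarith

private lemma norm_add_le_max_of_orth {x y : A} (h1 : star x * y = 0) (h2 : x * star y = 0) :
    ‖x + y‖ ≤ max ‖x‖ ‖y‖ := by
  have hu : IsSelfAdjoint (star x * x) := IsSelfAdjoint.star_mul_self x
  have hv : IsSelfAdjoint (star y * y) := IsSelfAdjoint.star_mul_self y
  have huv : (star x * x) * (star y * y) = 0 := by
    rw [mul_assoc, ← mul_assoc x (star y) y, h2, zero_mul, mul_zero]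
  have h2' : y * star x = 0 := by
    have := congrArg star h2
    simpa [star_mul] using this
  have h1' : star y * x = 0 := by
    have := congrArg star h1
    simpa [star_mul] using this
  have hvu : (star y * y) * (star x * x) = 0 := by
    rw [mul_assoc, ← mul_assoc y (star x) x, h2', zero_mul, mul_zero]
  have hexp : star (x + y) * (x + y) = star x * x + star y * y := by
    simp only [star_add, add_mul, mul_add]
    rw [h1, h1']
    abel
  have hsq : ‖x + y‖ ^ 2 ≤ (max ‖x‖ ‖y‖) ^ 2 := by
    calc ‖x + y‖ ^ 2 = ‖star (x + y) * (x + y)‖ := by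
          rw [CStarRing.norm_star_mul_self, sq]
      _ = ‖star x * x + star y * y‖ := by rw [hexp]
      _ ≤ max ‖star x * x‖ ‖star y * y‖ := norm_add_le_max_of_orth_sa hu hv huv hvu
      _ = max (‖x‖ ^ 2) (‖y‖ ^ 2) := by
          rw [CStarRing.norm_star_mul_self, CStarRing.norm_star_mul_self, sq, sq]
      _ = (max ‖x‖ ‖y‖) ^ 2 := by
          rcases le_total ‖x‖ ‖y‖ with h | h
          · rw [max_eq_right h, max_eq_right (by nlinarith [norm_nonneg x, norm_nonneg y])]
          · rw [max_eq_left h, max_eq_left (by nlinarith [norm_nonneg x, norm_nonneg y])]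
  exact (pow_le_pow_iff_left₀ (norm_nonneg _)
    (le_trans (norm_nonneg x) (le_max_left _ _)) two_ne_zero).mp hsq

private lemma exists_phase (z : ℂ) : ∃ c : ℂ, ‖c‖ = 1 ∧ c * z = (‖z‖ : ℂ) := by
  rcases eq_or_ne z 0 with rfl | hz
  · exact ⟨1, by simp, by simp⟩
  · refine ⟨(‖z‖ : ℂ) / z, ?_, ?_⟩
    · rw [norm_div, Complex.norm_real, Real.norm_of_nonneg (norm_nonneg z),
        div_self (norm_ne_zero_iff.mpr hz)]
    · rw [div_mul_cancel₀ _ hz]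

end Aux

/-- In a unital C*-algebra, if `p` is a projection, `q = 1 - p`, and `g`
is a bounded linear functional, then the functionals `g_p : b ↦ g (p b p)` and
`g_q : b ↦ g (q b q)` satisfy `‖g_p + g_q‖ = ‖g_p‖ + ‖g_q‖ ≤ ‖g‖`. -/
theorem norm_corner_functionals_add {B : Type*} [CStarAlgebra B]
    (p : B) (hp_star : star p = p) (hp_idem : p * p = p) (q : B) (hq : q = 1 - p)
    (g gp gq : B →L[ℂ] ℂ)
    (hgp : ∀ b : B, gp b = g (p * b * p)) (hgq : ∀ b : B, gq b = g (q * b * q)) :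
    ‖gp + gq‖ = ‖gp‖ + ‖gq‖ ∧ ‖gp‖ + ‖gq‖ ≤ ‖g‖ := by
  have hq_star : star q = q := by rw [hq]; simp [hp_star]
  have hq_idem : q * q = q := by
    have h : (1 - p) * (1 - p) = 1 - p - p + p * p := by noncomm_ring
    rw [hq, h, hp_idem]; abel
  have hpq : p * q = 0 := by rw [hq, mul_sub, mul_one, hp_idem, sub_self]
  have hqp : q * p = 0 := by rw [hq, sub_mul, one_mul, hp_idem, sub_self]
  have orthPQ : ∀ x y : B, (p * x * p) * (q * y * q) = 0 := by
    intro x y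
    simp only [mul_assoc]
    rw [← mul_assoc p q, hpq, zero_mul, mul_zero, mul_zero]
  have orthQP : ∀ x y : B, (q * x * q) * (p * y * p) = 0 := by
    intro x y
    simp only [mul_assoc]
    rw [← mul_assoc q p, hqp, zero_mul, mul_zero, mul_zero]
  have starP : ∀ x : B, star (p * x * p) = p * star x * p := by
    intro x
    rw [star_mul, star_mul, hp_star, ← mul_assoc]
  have starQ : ∀ x : B, star (q * x * q) = q * star x * q := by
    intro x
    rw [star_mul, star_mul, hq_star, ← mul_assoc]
  -- projections have norm ≤ 1
  have norm_proj_le : ∀ r : B, star r = r → r * r = r → ‖r‖ ≤ 1 := by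
    intro r hrs hri
    have h := CStarRing.norm_star_mul_self (x := r)
    rw [hrs, hri] at h
    nlinarith [norm_nonneg r]
  have hnp : ‖p‖ ≤ 1 := norm_proj_le p hp_star hp_idem
  have hnq : ‖q‖ ≤ 1 := norm_proj_le q hq_star hq_idem
  have hcorner_p : ∀ a : B, ‖p * a * p‖ ≤ ‖a‖ := by
    intro a
    have h := norm_mul₃_le (a := p) (b := a) (c := p)
    nlinarith [norm_nonneg a, norm_nonneg p,
      mul_le_mul_of_nonneg_right (mul_le_mul hnp hnp (norm_nonneg p) zero_le_one)
        (norm_nonneg a)]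
  have hcorner_q : ∀ a : B, ‖q * a * q‖ ≤ ‖a‖ := by
    intro a
    have h := norm_mul₃_le (a := q) (b := a) (c := q)
    nlinarith [norm_nonneg a, norm_nonneg q,
      mul_le_mul_of_nonneg_right (mul_le_mul hnq hnq (norm_nonneg q) zero_le_one)
        (norm_nonneg a)]
  -- key norm estimate for sums of corners
  have key : ∀ a b : B, ‖p * a * p + q * b * q‖ ≤ max ‖a‖ ‖b‖ := by
    intro a b
    have h1 : star (p * a * p) * (q * b * q) = 0 := by
      rw [starP]; exact orthPQ _ _
    have h2 : (p * a * p) * star (q * b * q) = 0 := by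
      rw [starQ]; exact orthPQ _ _
    calc ‖p * a * p + q * b * q‖ ≤ max ‖p * a * p‖ ‖q * b * q‖ :=
          norm_add_le_max_of_orth h1 h2
      _ ≤ max ‖a‖ ‖b‖ := max_le_max (hcorner_p a) (hcorner_q b)
  have hbound : ‖gp + gq‖ ≤ ‖g‖ := by
    apply ContinuousLinearMap.opNorm_le_bound _ (norm_nonneg g)
    intro b
    rw [ContinuousLinearMap.add_apply, hgp, hgq, ← map_add]
    calc ‖g (p * b * p + q * b * q)‖ ≤ ‖g‖ * ‖p * b * p + q * b * q‖ :=
          g.le_opNorm _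
      _ ≤ ‖g‖ * ‖b‖ := by
          gcongr
          simpa using key b b
  -- the hard inequality: ‖gp‖ + ‖gq‖ ≤ ‖gp + gq‖
  have hge : ‖gp‖ + ‖gq‖ ≤ ‖gp + gq‖ := by
    apply le_of_forall_sub_le
    intro ε hε
    obtain ⟨b₁, hb₁, hb₁'⟩ := gp.exists_lt_apply_of_lt_opNorm
      (show ‖gp‖ - ε / 2 < ‖gp‖ by linarith)
    obtain ⟨b₂, hb₂, hb₂'⟩ := gq.exists_lt_apply_of_lt_opNorm
      (show ‖gq‖ - ε / 2 < ‖gq‖ by linarith)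
    obtain ⟨c₁, hc₁, hc₁'⟩ := exists_phase (gp b₁)
    obtain ⟨c₂, hc₂, hc₂'⟩ := exists_phase (gq b₂)
    set a₁ : B := c₁ • b₁ with ha₁
    set a₂ : B := c₂ • b₂ with ha₂
    have hna₁ : ‖a₁‖ ≤ 1 := by rw [ha₁, norm_smul, hc₁, one_mul]; exact hb₁.le
    have hna₂ : ‖a₂‖ ≤ 1 := by rw [ha₂, norm_smul, hc₂, one_mul]; exact hb₂.le
    have hgpa₁ : gp a₁ = (‖gp b₁‖ : ℂ) := by rw [ha₁, map_smul, smul_eq_mul, hc₁']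
    have hgqa₂ : gq a₂ = (‖gq b₂‖ : ℂ) := by rw [ha₂, map_smul, smul_eq_mul, hc₂']
    set t : B := p * a₁ * p + q * a₂ * q with ht
    have hnt : ‖t‖ ≤ 1 := le_trans (key a₁ a₂) (max_le hna₁ hna₂)
    have reduceP : ∀ x : B, p * (p * x * p) * p = p * x * p := by
      intro x
      simp only [← mul_assoc]
      rw [hp_idem, mul_assoc (p * x) p p, hp_idem]
    have reduceQ : ∀ x : B, q * (q * x * q) * q = q * x * q := by
      intro x
      simp only [← mul_assoc]
      rw [hq_idem, mul_assoc (q * x) q q, hq_idem]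
    have annihP : ∀ x : B, p * (q * x * q) * p = 0 := by
      intro x
      simp only [← mul_assoc]
      rw [hpq, zero_mul, zero_mul, zero_mul]
    have annihQ : ∀ x : B, q * (p * x * p) * q = 0 := by
      intro x
      simp only [← mul_assoc]
      rw [hqp, zero_mul, zero_mul, zero_mul]
    have hgpt : gp t = gp a₁ := by
      rw [hgp t, hgp a₁]
      congr 1
      rw [ht, mul_add, add_mul, reduceP, annihP, add_zero]
    have hgqt : gq t = gq a₂ := by
      rw [hgq t, hgq a₂]
      congr 1
      rw [ht, mul_add, add_mul, reduceQ, annihQ, zero_add]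
    have hval : (gp + gq) t = ((‖gp b₁‖ + ‖gq b₂‖ : ℝ) : ℂ) := by
      rw [ContinuousLinearMap.add_apply, hgpt, hgqt, hgpa₁, hgqa₂]
      push_cast
      ring
    have hnorm_val : ‖(gp + gq) t‖ = ‖gp b₁‖ + ‖gq b₂‖ := by
      rw [hval, Complex.norm_real, Real.norm_of_nonneg (by positivity)]
    have hfin : ‖gp b₁‖ + ‖gq b₂‖ ≤ ‖gp + gq‖ := by
      rw [← hnorm_val]
      calc ‖(gp + gq) t‖ ≤ ‖gp + gq‖ * ‖t‖ := (gp + gq).le_opNorm t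
        _ ≤ ‖gp + gq‖ * 1 := by gcongr
        _ = ‖gp + gq‖ := mul_one _
    linarith
  exact ⟨le_antisymm (norm_add_le _ _) hge, le_trans hge hbound⟩
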